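/- For all even nonnegative integers v₁ and all real m > 0: ∑_{q odd, q≥1} 1/((q²+m²) q^{v₁}) = ((-1)^{v₁/2}/m^{v₁}) · π tanh(mπ/2)/(4m) + ∑_{j=0}^{v₁/2 - 1} ((-1)^j/m^{2+2j}) (1 - 2^{-(v₁-2j)}) ζ(v₁ - 2j). -/

import Mathlib

open Real Complex MeasureTheory intervalIntegral Set

lemma exp_neg_int_pi (n : ℤ) : Complex.exp (-(n * (↑π * I))) = (-1 : ℂ) ^ n := by
  rw [show -((n : ℂ) * (↑π * I)) = ((-n : ℤ) : ℂ) * (↑π * I) by push_cast; ring,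
    Complex.exp_int_mul, Complex.exp_pi_mul_I, zpow_neg]
  exact inv_eq_of_mul_eq_one_left (by rw [← mul_zpow]; norm_num)

lemma exp_int_pi (n : ℤ) : Complex.exp ((n * (↑π * I))) = (-1 : ℂ) ^ n := by
  rw [Complex.exp_int_mul, Complex.exp_pi_mul_I]

lemma key_int (a : ℝ) (n : ℤ) (ha : a ≠ 0) :
    ∫ x in (-π)..π, Complex.exp (((a : ℂ) - n * I) * x) =
      (-1 : ℂ) ^ n * (2 * Real.sinh (a * π)) / ((a : ℂ) - n * I) := by
  have hc : (a : ℂ) - n * I ≠ 0 := by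
    intro h
    have := congrArg Complex.re h
    simp [Complex.sub_re, Complex.mul_re] at this
    exact ha this
  rw [integral_exp_mul_complex hc]
  congr 1
  have h1 : ((a : ℂ) - n * I) * ↑π = a * π + (-(n * (π * I))) := by push_cast; ring
  have h2 : ((a : ℂ) - n * I) * ↑(-π) = -((a : ℂ) * π) + (n * (π * I)) := by push_cast; ring
  rw [h1, h2, Complex.exp_add, Complex.exp_add, exp_neg_int_pi, exp_int_pi]
  rw [Real.sinh_eq]
  push_cast [Complex.exp_neg]
  ring

instance fact_two_pi : Fact (0 < 2 * π) := ⟨by positivity⟩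

noncomputable def coshLift (a : ℝ) : AddCircle (2 * π) → ℂ :=
  AddCircle.liftIco (2 * π) (-π) (fun x => (Real.cosh (a * x) : ℂ))

lemma coshLift_continuous (a : ℝ) : Continuous (coshLift a) := by
  apply AddCircle.liftIco_continuous
  · show (Real.cosh (a * -π) : ℂ) = (Real.cosh (a * (-π + 2 * π)) : ℂ)
    rw [show a * (-π + 2 * π) = a * π by ring, show a * -π = -(a * π) by ring, Real.cosh_neg]
  · fun_prop

lemma denom_ne_zero (a : ℝ) (ha : 0 < a) (n : ℤ) : ((n : ℂ) ^ 2 + (a : ℂ) ^ 2) ≠ 0 := by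
  intro h
  have h' : ((n:ℝ)^2 + a^2) = 0 := by exact_mod_cast h
  nlinarith [sq_nonneg ((n : ℝ))]

lemma coshLift_fourierCoeff (a : ℝ) (ha : 0 < a) (n : ℤ) :
    fourierCoeff (coshLift a) n =
      (-1 : ℂ) ^ n * (a * Real.sinh (a * π)) / (π * ((n : ℂ) ^ 2 + (a : ℂ) ^ 2)) := by
  rw [coshLift, fourierCoeff_liftIco_eq, fourierCoeffOn_eq_integral]
  have hint : ∀ x ∈ uIcc (-π) (-π + 2 * π),
      (fourier (-n) (x : AddCircle (-π + 2 * π - -π)) : ℂ) • (Real.cosh (a * x) : ℂ) =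
      (1 / 2 : ℂ) * (Complex.exp (((a : ℂ) - n * I) * x) +
        Complex.exp ((((-a : ℝ) : ℂ) - n * I) * x)) := by
    intro x _
    rw [fourier_coe_apply, smul_eq_mul, Real.cosh_eq]
    have hpi : (π : ℂ) ≠ 0 := Complex.ofReal_ne_zero.mpr Real.pi_ne_zero
    push_cast
    rw [show (-↑π + 2 * ↑π - -↑π : ℂ) = 2 * ↑π from by ring,
      show 2 * (π:ℂ) * I * -↑n * ↑x / (2 * ↑π) = -((n:ℂ) * I * ↑x) from by
        field_simp]
    have E1 : Complex.exp (((a:ℂ) - ↑n*I) * ↑x) =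
        Complex.exp ((a:ℂ)*↑x) * Complex.exp (-(↑n*I*↑x)) := by
      rw [← Complex.exp_add]; congr 1; ring
    have E2 : Complex.exp ((-(a:ℂ) - ↑n*I) * ↑x) =
        Complex.exp (-((a:ℂ)*↑x)) * Complex.exp (-(↑n*I*↑x)) := by
      rw [← Complex.exp_add]; congr 1; ring
    rw [E1, E2]
    ring
  rw [intervalIntegral.integral_congr hint]
  rw [intervalIntegral.integral_const_mul, intervalIntegral.integral_add
    (Continuous.intervalIntegrable (by fun_prop) _ _)
    (Continuous.intervalIntegrable (by fun_prop) _ _)]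
  rw [show (-π + 2*π : ℝ) = π by ring, key_int a n ha.ne', key_int (-a) n (by linarith)]
  have h1 : ((a:ℂ) - n*I) ≠ 0 := fun h => ha.ne' (by simpa [Complex.sub_re, Complex.mul_re] using congrArg Complex.re h)
  have h2 : (((-a:ℝ):ℂ) - n*I) ≠ 0 := fun h => (by linarith : -a ≠ 0) (by simpa [Complex.sub_re, Complex.mul_re] using congrArg Complex.re h)
  have hprod : ((a:ℂ) - n*I) * (((-a:ℝ):ℂ) - n*I) = -(((n:ℂ)^2 + (a:ℂ)^2)) := by
    push_cast; ring_nf; rw [Complex.I_sq]; ring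
  have hpi : (π : ℂ) ≠ 0 := Complex.ofReal_ne_zero.mpr Real.pi_ne_zero
  have hd := denom_ne_zero a ha n
  rw [show (-a * π) = -(a * π) by ring, Real.sinh_neg,
    show (π - -π : ℝ) = 2 * π from by ring, Complex.real_smul]
  rw [div_add_div _ _ h1 h2, hprod, div_neg]
  push_cast
  field_simp
  ring

lemma summable_nat_one_div_sq_add (a : ℝ) (ha : 0 < a) :
    Summable (fun n : ℕ => 1 / ((n : ℝ) ^ 2 + a ^ 2)) := by
  rw [← summable_nat_add_iff 1]
  have h0 : Summable (fun n : ℕ => 1 / ((n : ℝ) + 1) ^ 2) := by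
    have := (summable_nat_add_iff (f := fun n : ℕ => 1 / (n : ℝ) ^ 2) 1).mpr
      (Real.summable_one_div_nat_pow.mpr one_lt_two)
    simpa using this
  apply h0.of_nonneg_of_le (fun n => by positivity)
  intro n
  apply one_div_le_one_div_of_le (by positivity)
  push_cast
  nlinarith [sq_nonneg a]

lemma summable_int_one_div_sq_add (a : ℝ) (ha : 0 < a) :
    Summable (fun n : ℤ => 1 / ((n : ℝ) ^ 2 + a ^ 2)) := by
  apply Summable.of_nat_of_neg_add_one
  · simpa using summable_nat_one_div_sq_add a ha
  · have := summable_nat_one_div_sq_add a ha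
    rw [← summable_nat_add_iff 1] at this
    apply this.congr
    intro n
    push_cast
    ring_nf

lemma hasSum_int_one_div_sq_add (a : ℝ) (ha : 0 < a) :
    HasSum (fun n : ℤ => 1 / ((n : ℝ) ^ 2 + a ^ 2))
      (π * Real.cosh (a * π) / (a * Real.sinh (a * π))) := by
  set F : C(AddCircle (2 * π), ℂ) := ⟨coshLift a, coshLift_continuous a⟩ with hF
  have hcoeff : ∀ n : ℤ, fourierCoeff (⇑F) n =
      (-1 : ℂ) ^ n * (a * Real.sinh (a * π)) / (π * ((n : ℂ) ^ 2 + (a : ℂ) ^ 2)) :=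
    fun n => coshLift_fourierCoeff a ha n
  have hs : Summable (fun n : ℤ => fourierCoeff (⇑F) n) := by
    apply Summable.of_norm
    have hbound := (summable_int_one_div_sq_add a ha).mul_left (|a * Real.sinh (a * π)| / π)
    apply hbound.of_nonneg_of_le (fun n => norm_nonneg _)
    intro n
    rw [hcoeff n]
    have h3 : (-1 : ℂ) ^ n * (↑a * ↑(Real.sinh (a * π))) / (↑π * ((n : ℂ) ^ 2 + (a : ℂ) ^ 2)) =
        (((a * Real.sinh (a * π)) / (π * ((n : ℝ) ^ 2 + a ^ 2)) : ℝ) : ℂ) * (-1 : ℂ) ^ n := by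
      push_cast; ring
    rw [h3, norm_mul, norm_zpow, norm_neg, norm_one, one_zpow, mul_one, Complex.norm_real,
      Real.norm_eq_abs, abs_div, abs_of_pos (show (0:ℝ) < π * ((n : ℝ) ^ 2 + a ^ 2) by positivity)]
    apply le_of_eq
    rw [div_mul_eq_mul_div, mul_one_div, div_div, mul_comm π]
  have hpt := has_pointwise_sum_fourier_series_of_summable hs (((-π : ℝ) : AddCircle (2 * π)))
  have hmem : (-π : ℝ) ∈ Set.Ico (-π) (-π + 2 * π) := ⟨le_refl _, by linarith [Real.pi_pos]⟩
  have hFx : F (((-π : ℝ) : AddCircle (2 * π))) = ((Real.cosh (a * π) : ℝ) : ℂ) := by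
    show coshLift a _ = _
    rw [coshLift, AddCircle.liftIco_coe_apply hmem]
    norm_num [show a * -π = -(a * π) by ring, Real.cosh_neg]
  have hfour : ∀ i : ℤ, (fourier i (((-π : ℝ) : AddCircle (2 * π))) : ℂ) = (-1 : ℂ) ^ i := by
    intro i
    rw [fourier_coe_apply]
    have hpi : (π : ℂ) ≠ 0 := Complex.ofReal_ne_zero.mpr Real.pi_ne_zero
    rw [show 2 * ↑π * I * ↑i * ↑(-π) / ↑(2 * π) = -(↑i * (↑π * I)) from by
      push_cast; field_simp]
    exact exp_neg_int_pi i
  have hterm : ∀ i : ℤ, fourierCoeff (⇑F) i • (fourier i (((-π : ℝ) : AddCircle (2 * π))) : ℂ)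
      = (((a * Real.sinh (a * π)) / (π * ((i : ℝ) ^ 2 + a ^ 2)) : ℝ) : ℂ) := by
    intro i
    rw [smul_eq_mul, hcoeff i, hfour i]
    have hsq : ((-1 : ℂ)) ^ i * (-1 : ℂ) ^ i = 1 := by
      rw [← zpow_add₀ (by norm_num : (-1 : ℂ) ≠ 0), show i + i = 2 * i by ring, zpow_mul]
      norm_num
    push_cast
    calc (-1 : ℂ) ^ i * (↑a * Complex.sinh (↑a * ↑π)) / (↑π * (↑i ^ 2 + ↑a ^ 2)) * (-1) ^ i
        = ((-1 : ℂ) ^ i * (-1) ^ i) * ((↑a * Complex.sinh (↑a * ↑π)) / (↑π * (↑i ^ 2 + ↑a ^ 2))) := by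
          ring
      _ = _ := by rw [hsq]; ring
  simp_rw [hterm, hFx] at hpt
  rw [hasSum_ofReal] at hpt
  have hsinh : 0 < Real.sinh (a * π) := Real.sinh_pos_iff.mpr (by positivity)
  have := hpt.mul_left (π / (a * Real.sinh (a * π)))
  have heq : ∀ i : ℤ, (π / (a * Real.sinh (a * π))) * ((a * Real.sinh (a * π)) / (π * ((i : ℝ) ^ 2 + a ^ 2)))
      = 1 / ((i : ℝ) ^ 2 + a ^ 2) := by
    intro i
    have hd : (i : ℝ) ^ 2 + a ^ 2 > 0 := by positivity
    field_simp
  simp_rw [heq] at this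
  rw [show π * Real.cosh (a * π) / (a * Real.sinh (a * π)) =
    π / (a * Real.sinh (a * π)) * Real.cosh (a * π) by rw [div_mul_eq_mul_div]]
  exact this

lemma hasSum_shifted (a : ℝ) (ha : 0 < a) :
    HasSum (fun n : ℕ => 1 / (((n : ℝ) + 1) ^ 2 + a ^ 2))
      ((π * Real.cosh (a * π) / (a * Real.sinh (a * π)) - 1 / a ^ 2) / 2) := by
  have hg : Summable (fun n : ℕ => 1 / (((n : ℝ) + 1) ^ 2 + a ^ 2)) := by
    have := (summable_nat_add_iff (f := fun n : ℕ => 1 / ((n : ℝ) ^ 2 + a ^ 2)) 1).mpr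
      (summable_nat_one_div_sq_add a ha)
    apply this.congr; intro n; push_cast; ring_nf
  set N := ∑' n : ℕ, 1 / (((n : ℝ) + 1) ^ 2 + a ^ 2) with hN
  have hgN : HasSum (fun n : ℕ => 1 / (((n : ℝ) + 1) ^ 2 + a ^ 2)) N := hg.hasSum
  have h1 : HasSum (fun n : ℕ => 1 / (((n + 1 : ℕ) : ℝ) ^ 2 + a ^ 2)) N := by
    have e : (fun n : ℕ => 1 / (((n + 1 : ℕ) : ℝ) ^ 2 + a ^ 2)) =
        (fun n : ℕ => 1 / (((n : ℝ) + 1) ^ 2 + a ^ 2)) := by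
      funext n; push_cast; ring_nf
    rw [e]; exact hgN
  have hnat := (hasSum_nat_add_iff (f := fun n : ℕ => 1 / ((n : ℝ) ^ 2 + a ^ 2)) 1).mp h1
  rw [Finset.sum_range_one,
    show (1 : ℝ) / (((0 : ℕ) : ℝ) ^ 2 + a ^ 2) = 1 / a ^ 2 by norm_num] at hnat
  have hnat' : HasSum (fun n : ℕ => 1 / ((((n : ℤ)) : ℝ) ^ 2 + a ^ 2)) (N + 1 / a ^ 2) := by
    have e : (fun n : ℕ => 1 / ((((n : ℤ)) : ℝ) ^ 2 + a ^ 2)) =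
        (fun n : ℕ => 1 / ((n : ℝ) ^ 2 + a ^ 2)) := by
      funext n; push_cast; ring_nf
    rw [e]; exact hnat
  have hneg : HasSum (fun n : ℕ => 1 / ((((-(n + 1) : ℤ)) : ℝ) ^ 2 + a ^ 2)) N := by
    have e : (fun n : ℕ => 1 / ((((-(n + 1) : ℤ)) : ℝ) ^ 2 + a ^ 2)) =
        (fun n : ℕ => 1 / (((n : ℝ) + 1) ^ 2 + a ^ 2)) := by
      funext n; push_cast; ring_nf
    rw [e]; exact hgN
  have hint : HasSum (fun n : ℤ => 1 / ((n : ℝ) ^ 2 + a ^ 2)) ((N + 1 / a ^ 2) + N) :=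
    HasSum.of_nat_of_neg_add_one hnat' hneg
  have huniq := hint.unique (hasSum_int_one_div_sq_add a ha)
  have : N = (π * Real.cosh (a * π) / (a * Real.sinh (a * π)) - 1 / a ^ 2) / 2 := by
    linarith
  rw [← this]; exact hgN

lemma tanh_identity (m : ℝ) (hm : 0 < m) :
    ((π * Real.cosh (m * π) / (m * Real.sinh (m * π)) - 1 / m ^ 2) / 2) -
      ((π * Real.cosh (m / 2 * π) / (m / 2 * Real.sinh (m / 2 * π)) - 1 / (m / 2) ^ 2) / 2) / 4
    = π * Real.tanh (m * π / 2) / (4 * m) := by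
  have hs : 0 < Real.sinh (m * π / 2) := Real.sinh_pos_iff.mpr (by positivity)
  have hc : 0 < Real.cosh (m * π / 2) := Real.cosh_pos _
  rw [show m * π = 2 * (m * π / 2) by ring, Real.sinh_two_mul, Real.cosh_two_mul,
    show m / 2 * π = m * π / 2 by ring, Real.tanh_eq_sinh_div_cosh]
  have hid := Real.cosh_sq_sub_sinh_sq (m * π / 2)
  set s := Real.sinh (m * π / 2)
  set c := Real.cosh (m * π / 2)
  have hm2 : m ≠ 0 := hm.ne'
  field_simp
  rw [show π * m / 2 = m * π / 2 by ring, show Real.cosh (m * π / 2) = c from rfl,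
    show Real.sinh (m * π / 2) = s from rfl]
  nlinarith [hid, sq_nonneg s, sq_nonneg c, hs, hc]

lemma hasSum_odd_base (m : ℝ) (hm : 0 < m) :
    HasSum (fun q : ℕ => 1 / ((2 * (q : ℝ) + 1) ^ 2 + m ^ 2))
      (π * Real.tanh (m * π / 2) / (4 * m)) := by
  have hNm := hasSum_shifted m hm
  have hNh := hasSum_shifted (m / 2) (by positivity)
  set Nm := (π * Real.cosh (m * π) / (m * Real.sinh (m * π)) - 1 / m ^ 2) / 2 with hNmdef
  set E := ((π * Real.cosh (m / 2 * π) / (m / 2 * Real.sinh (m / 2 * π)) - 1 / (m / 2) ^ 2) / 2) / 4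
    with hEdef
  set g : ℕ → ℝ := fun n : ℕ => 1 / (((n : ℝ) + 1) ^ 2 + m ^ 2) with hgdef
  have heven : HasSum (fun k : ℕ => g (2 * k + 1)) E := by
    have h4 := hNh.mul_left (1 / 4)
    have e : (fun k : ℕ => (1 / 4) * (1 / (((k : ℝ) + 1) ^ 2 + (m / 2) ^ 2))) =
        (fun k : ℕ => g (2 * k + 1)) := by
      funext k
      show _ = 1 / ((((2 * k + 1 : ℕ) : ℝ) + 1) ^ 2 + m ^ 2)
      have hd : ((k : ℝ) + 1) ^ 2 + (m / 2) ^ 2 > 0 := by positivity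
      have hd2 : (((2 * k + 1 : ℕ) : ℝ) + 1) ^ 2 + m ^ 2 > 0 := by positivity
      rw [div_mul_div_comm, one_mul, div_eq_div_iff (by positivity) hd2.ne']
      push_cast
      ring
    rw [e] at h4
    rw [show E = 1 / 4 * ((π * Real.cosh (m / 2 * π) / (m / 2 * Real.sinh (m / 2 * π)) -
      1 / (m / 2) ^ 2) / 2) by rw [hEdef]; ring]
    exact h4
  have hodd_s : Summable (fun k : ℕ => g (2 * k)) :=
    hNm.summable.comp_injective (fun x y h => by omega)
  have htot : HasSum g ((∑' k : ℕ, g (2 * k)) + E) := HasSum.even_add_odd hodd_s.hasSum heven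
  have huniq : (∑' k : ℕ, g (2 * k)) + E = Nm := htot.unique hNm
  have hval : (∑' k : ℕ, g (2 * k)) = π * Real.tanh (m * π / 2) / (4 * m) := by
    rw [← tanh_identity m hm, hNmdef, hEdef] at *
    linarith
  have hodd := hodd_s.hasSum
  rw [hval] at hodd
  have e2 : (fun k : ℕ => g (2 * k)) = (fun q : ℕ => 1 / ((2 * (q : ℝ) + 1) ^ 2 + m ^ 2)) := by
    funext k
    show 1 / ((((2 * k : ℕ) : ℝ) + 1) ^ 2 + m ^ 2) = _
    push_cast
    ring_nf
  rw [e2] at hodd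
  exact hodd

lemma hasSum_nat_pow_c (k : ℕ) (hk : 2 ≤ k) :
    Summable (fun n : ℕ => (1 : ℂ) / (n : ℂ) ^ k) := by
  apply Summable.of_norm
  have : Summable (fun n : ℕ => 1 / (n : ℝ) ^ k) :=
    Real.summable_one_div_nat_pow.mpr (by omega)
  apply this.congr
  intro n
  rw [show ((1 : ℂ) / (n : ℂ) ^ k) = (((1 / (n : ℝ) ^ k : ℝ)) : ℂ) by push_cast; ring,
    Complex.norm_real, Real.norm_eq_abs, _root_.abs_of_nonneg (by positivity)]

lemma hasSum_oddZeta (k : ℕ) (hk : 2 ≤ k) :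
    HasSum (fun q : ℕ => (1 : ℂ) / (2 * (q : ℂ) + 1) ^ k)
      ((1 - (2 : ℂ) ^ (-(k : ℤ))) * riemannZeta k) := by
  set Z := riemannZeta k with hZdef
  set h : ℕ → ℂ := fun n : ℕ => (1 : ℂ) / (n : ℂ) ^ k with hhdef
  have hzs : HasSum h Z := by
    rw [hZdef, zeta_nat_eq_tsum_of_gt_one (by omega : 1 < k)]
    exact (hasSum_nat_pow_c k hk).hasSum
  have heven : HasSum (fun j : ℕ => h (2 * j)) (((2 : ℂ) ^ k)⁻¹ * Z) := by
    have h2 := hzs.mul_left ((2 : ℂ) ^ k)⁻¹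
    have e : (fun j : ℕ => ((2 : ℂ) ^ k)⁻¹ * h j) = (fun j : ℕ => h (2 * j)) := by
      funext j
      show ((2 : ℂ) ^ k)⁻¹ * (1 / (j : ℂ) ^ k) = (1 : ℂ) / ((2 * j : ℕ) : ℂ) ^ k
      push_cast
      rw [mul_pow, one_div, one_div, mul_inv]
    rw [e] at h2
    exact h2
  have hodd_s : Summable (fun j : ℕ => h (2 * j + 1)) :=
    hzs.summable.comp_injective (fun x y hxy => by omega)
  have htot : HasSum h ((((2 : ℂ) ^ k)⁻¹ * Z) + ∑' j : ℕ, h (2 * j + 1)) :=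
    HasSum.even_add_odd heven hodd_s.hasSum
  have huniq := htot.unique hzs
  have hval : ∑' j : ℕ, h (2 * j + 1) = (1 - (2 : ℂ) ^ (-(k : ℤ))) * Z := by
    have hT := eq_sub_of_add_eq' huniq
    rw [zpow_neg, zpow_natCast, sub_mul, one_mul, hT]
  have hodd := hodd_s.hasSum
  rw [hval] at hodd
  have e2 : (fun j : ℕ => h (2 * j + 1)) = (fun q : ℕ => (1 : ℂ) / (2 * (q : ℂ) + 1) ^ k) := by
    funext j
    show (1 : ℂ) / ((2 * j + 1 : ℕ) : ℂ) ^ k = _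
    push_cast
    ring_nf
  rw [e2] at hodd
  exact hodd

lemma frac_split (A B C M : ℂ) (hA : A ≠ 0) (hB : B ≠ 0) (hC : C ≠ 0) (hM : M ≠ 0)
    (h : A - C = M) : 1 / (A * (B * C)) = M⁻¹ * (1 / (B * C)) - M⁻¹ * (1 / (A * B)) := by
  have key : 1 / (B * C) - 1 / (A * B) = (A - C) / (A * (B * C)) := by
    rw [div_sub_div _ _ (mul_ne_zero hB hC) (mul_ne_zero hA hB),
      div_eq_div_iff (mul_ne_zero (mul_ne_zero hB hC) (mul_ne_zero hA hB))
        (mul_ne_zero hA (mul_ne_zero hB hC))]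
    ring
  rw [← mul_sub, key, h, mul_div_assoc', inv_mul_cancel₀ hM]

lemma term_eq (m : ℝ) (v q : ℕ) :
    (1 : ℂ) / (((2 * (q : ℂ) + 1) ^ 2 + (m : ℂ) ^ 2) * (2 * (q : ℂ) + 1) ^ (2 * v)) =
      (((1 / (((2 * (q : ℝ) + 1) ^ 2 + m ^ 2) * (2 * (q : ℝ) + 1) ^ (2 * v)) : ℝ)) : ℂ) := by
  push_cast
  ring

lemma summable_term (m : ℝ) (hm : 0 < m) (v : ℕ) :
    Summable (fun q : ℕ => (1 : ℂ) /
      (((2 * (q : ℂ) + 1) ^ 2 + (m : ℂ) ^ 2) * (2 * (q : ℂ) + 1) ^ (2 * v))) := by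
  have e : (fun q : ℕ => (1 : ℂ) /
      (((2 * (q : ℂ) + 1) ^ 2 + (m : ℂ) ^ 2) * (2 * (q : ℂ) + 1) ^ (2 * v))) =
      (fun q : ℕ =>
        (((1 / (((2 * (q : ℝ) + 1) ^ 2 + m ^ 2) * (2 * (q : ℝ) + 1) ^ (2 * v)) : ℝ)) : ℂ)) := by
    funext q; exact term_eq m v q
  rw [e, Complex.summable_ofReal]
  apply ((hasSum_odd_base m hm).summable).of_nonneg_of_le
  · intro q; positivity
  · intro q
    have h1 : (0 : ℝ) < (2 * (q : ℝ) + 1) ^ 2 + m ^ 2 := by positivity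
    apply one_div_le_one_div_of_le h1
    apply le_mul_of_one_le_right h1.le
    apply one_le_pow₀
    linarith [Nat.cast_nonneg (α := ℝ) q]

/-- For all even nonnegative integers `v₁ = 2v` and all real `m > 0`:
`∑_{q odd, q ≥ 1} 1/((q²+m²) q^{v₁}) = ((-1)^{v₁/2}/m^{v₁}) π tanh(mπ/2)/(4m)
  + ∑_{j=0}^{v₁/2-1} ((-1)^j/m^{2+2j}) (1 - 2^{-(v₁-2j)}) ζ(v₁-2j)`. -/
theorem odd_sum_one_div_sq_add_sq_mul_pow
    (v : ℕ) (m : ℝ) (hm : 0 < m) :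
    ∑' q : ℕ, (1 : ℂ) /
        (((2 * (q : ℂ) + 1) ^ 2 + (m : ℂ) ^ 2) * (2 * (q : ℂ) + 1) ^ (2 * v)) =
      ((-1 : ℂ) ^ v / (m : ℂ) ^ (2 * v)) *
        ((Real.pi * Real.tanh (m * Real.pi / 2) / (4 * m) : ℝ) : ℂ)
      + ∑ j ∈ Finset.range v,
          ((-1 : ℂ) ^ j / (m : ℂ) ^ (2 + 2 * j)) *
            (1 - (2 : ℂ) ^ (-(2 * (v : ℤ) - 2 * (j : ℤ)))) *
            riemannZeta ((2 * v - 2 * j : ℕ) : ℂ) := by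
  induction v with
  | zero =>
    simp only [Nat.mul_zero, pow_zero, mul_one, Finset.range_zero, Finset.sum_empty, add_zero]
    have e : ∀ q : ℕ, (1 : ℂ) / ((2 * (q : ℂ) + 1) ^ 2 + (m : ℂ) ^ 2) =
        (((1 / ((2 * (q : ℝ) + 1) ^ 2 + m ^ 2) : ℝ)) : ℂ) := by
      intro q; push_cast; ring
    rw [tsum_congr e, ← Complex.ofReal_tsum, (hasSum_odd_base m hm).tsum_eq]
    norm_num
  | succ v ih =>
    have hm' : ((m : ℂ)) ≠ 0 := Complex.ofReal_ne_zero.mpr hm.ne'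
    have hq : ∀ q : ℕ, (2 * (q : ℂ) + 1) ≠ 0 := by
      intro q
      rw [show (2 * (q : ℂ) + 1) = ((2 * (q : ℝ) + 1 : ℝ) : ℂ) by push_cast; ring]
      exact Complex.ofReal_ne_zero.mpr (by positivity)
    have hd : ∀ q : ℕ, ((2 * (q : ℂ) + 1) ^ 2 + (m : ℂ) ^ 2) ≠ 0 := by
      intro q
      rw [show (2 * (q : ℂ) + 1) ^ 2 + (m : ℂ) ^ 2 =
        (((2 * (q : ℝ) + 1) ^ 2 + m ^ 2 : ℝ) : ℂ) by push_cast; ring]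
      exact Complex.ofReal_ne_zero.mpr (by positivity)
    have hstep : ∀ q : ℕ, (1 : ℂ) /
        (((2 * (q : ℂ) + 1) ^ 2 + (m : ℂ) ^ 2) * (2 * (q : ℂ) + 1) ^ (2 * (v + 1))) =
        ((m : ℂ) ^ 2)⁻¹ * ((1 : ℂ) / (2 * (q : ℂ) + 1) ^ (2 * (v + 1))) -
        ((m : ℂ) ^ 2)⁻¹ * ((1 : ℂ) /
          (((2 * (q : ℂ) + 1) ^ 2 + (m : ℂ) ^ 2) * (2 * (q : ℂ) + 1) ^ (2 * v))) := by
      intro q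
      rw [show 2 * (v + 1) = 2 * v + 2 by ring, pow_add]
      exact frac_split _ _ _ _ (hd q) (pow_ne_zero _ (hq q)) (pow_ne_zero _ (hq q))
        (pow_ne_zero 2 hm') (by ring)
    rw [tsum_congr hstep,
      Summable.tsum_sub (((hasSum_oddZeta (2 * (v + 1)) (by omega)).summable).mul_left _)
        ((summable_term m hm v).mul_left _),
      tsum_mul_left, tsum_mul_left,
      (hasSum_oddZeta (2 * (v + 1)) (by omega)).tsum_eq, ih, Finset.sum_range_succ']
    have hshift : ∀ j ∈ Finset.range v,
        ((-1 : ℂ) ^ (j + 1) / (m : ℂ) ^ (2 + 2 * (j + 1))) *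
            (1 - (2 : ℂ) ^ (-(2 * ((v + 1 : ℕ) : ℤ) - 2 * ((j + 1 : ℕ) : ℤ)))) *
            riemannZeta ((2 * (v + 1) - 2 * (j + 1) : ℕ) : ℂ) =
        -((m : ℂ) ^ 2)⁻¹ * (((-1 : ℂ) ^ j / (m : ℂ) ^ (2 + 2 * j)) *
            (1 - (2 : ℂ) ^ (-(2 * (v : ℤ) - 2 * (j : ℤ)))) *
            riemannZeta ((2 * v - 2 * j : ℕ) : ℂ)) := by
      intro j hj
      rw [show (2 * (v + 1) - 2 * (j + 1) : ℕ) = (2 * v - 2 * j : ℕ) by omega,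
        show (-(2 * ((v + 1 : ℕ) : ℤ) - 2 * ((j + 1 : ℕ) : ℤ))) =
          -(2 * (v : ℤ) - 2 * (j : ℤ)) by push_cast; ring,
        pow_succ, show 2 + 2 * (j + 1) = (2 + 2 * j) + 2 by ring, pow_add]
      ring
    rw [Finset.sum_congr rfl hshift, ← Finset.mul_sum]
    have hf0 : ((-1 : ℂ) ^ 0 / (m : ℂ) ^ (2 + 2 * 0)) *
        (1 - (2 : ℂ) ^ (-(2 * ((v + 1 : ℕ) : ℤ) - 2 * ((0 : ℕ) : ℤ)))) *
        riemannZeta ((2 * (v + 1) - 2 * 0 : ℕ) : ℂ) =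
        ((m : ℂ) ^ 2)⁻¹ * ((1 - (2 : ℂ) ^ (-((2 * (v + 1) : ℕ) : ℤ))) *
          riemannZeta (((2 * (v + 1) : ℕ)) : ℂ)) := by
      rw [show (2 * (v + 1) - 2 * 0 : ℕ) = (2 * (v + 1) : ℕ) by omega,
        show (-(2 * ((v + 1 : ℕ) : ℤ) - 2 * ((0 : ℕ) : ℤ))) = -((2 * (v + 1) : ℕ) : ℤ) by
          push_cast; ring]
      norm_num [mul_assoc]
    rw [hf0]
    have hA : ((-1 : ℂ) ^ (v + 1) / (m : ℂ) ^ (2 * (v + 1))) *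
        ((Real.pi * Real.tanh (m * Real.pi / 2) / (4 * m) : ℝ) : ℂ) =
        -((m : ℂ) ^ 2)⁻¹ * (((-1 : ℂ) ^ v / (m : ℂ) ^ (2 * v)) *
          ((Real.pi * Real.tanh (m * Real.pi / 2) / (4 * m) : ℝ) : ℂ)) := by
      rw [pow_succ, show 2 * (v + 1) = 2 * v + 2 by ring, pow_add]
      ring
    rw [hA]
    ring
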